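/- Let β^{(2n)} be an extremal d-dimensional truncated moment sequence (rank M(n) = card V = r). If M(n) is positive semidefinite and β is consistent, then β has a unique representing measure, namely the r-atomic measure μ = Σ_{k=1}^r ρ_k δ_{w_k} supported on V = {w_1,...,w_r}, with all densities ρ_k > 0. -/

import Mathlib

open MvPolynomial MeasureTheory

/-- `μ` is a representing measure for the truncated moment sequence with Riesz
functional `Λ` (degree `2n`): every monomial (equivalently polynomial) of degree
at most `2n` is integrable with integral the prescribed moment. -/
def IsRepresenting (d n : ℕ) (Λ : MvPolynomial (Fin d) ℝ →ₗ[ℝ] ℝ)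
    (μ : Measure (Fin d → ℝ)) : Prop :=
  ∀ p : MvPolynomial (Fin d) ℝ, p.totalDegree ≤ 2 * n →
    Integrable (fun x => MvPolynomial.eval x p) μ ∧
    (∫ x, MvPolynomial.eval x p ∂μ) = Λ p

/-- Cauchy–Schwarz-type consequence of positivity of the Riesz functional. -/
lemma aux_cs {d n : ℕ} (Λ : MvPolynomial (Fin d) ℝ →ₗ[ℝ] ℝ)
    (hpsd : ∀ p : MvPolynomial (Fin d) ℝ, p.totalDegree ≤ n → 0 ≤ Λ (p * p))
    (p q : MvPolynomial (Fin d) ℝ) (hp : p.totalDegree ≤ n) (hq : q.totalDegree ≤ n)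
    (hp0 : Λ (p * p) = 0) : Λ (p * q) = 0 := by
  have key : ∀ t : ℝ, 0 ≤ Λ (q*q) * (t*t) + (2 * Λ (p*q)) * t + 0 := by
    intro t
    have hdeg : (p + t • q).totalDegree ≤ n := by
      refine le_trans (MvPolynomial.totalDegree_add _ _) (max_le hp ?_)
      exact le_trans (MvPolynomial.totalDegree_smul_le _ _) hq
    have h := hpsd _ hdeg
    have expand : (p + t • q) * (p + t • q) = p*p + t • (p*q) + t • (q*p) + (t*t) • (q*q) := by
      rw [add_mul, mul_add, mul_add, smul_mul_assoc, mul_smul_comm, smul_mul_assoc,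
        mul_smul_comm, smul_smul]
      ring_nf
    rw [expand] at h
    simp only [map_add, LinearMap.map_smul, hp0, mul_comm q p, smul_eq_mul] at h
    nlinarith [h]
  have hd := discrim_le_zero key
  have h2 : discrim (Λ (q*q)) (2 * Λ (p*q)) 0 = (2 * Λ (p*q))^2 := by
    simp [discrim]
  rw [h2] at hd
  nlinarith [sq_nonneg (Λ (p*q))]

/-- A strongly measurable function is integrable with respect to a Dirac measure. -/
lemma aux_integrable_dirac {α E : Type*} [MeasurableSpace α] [MeasurableSingletonClass α]
    [NormedAddCommGroup E] {f : α → E} (_hf : StronglyMeasurable f) (a : α) :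
    Integrable f (Measure.dirac a) := by
  refine (integrable_const (f a)).congr ?_
  rw [ae_dirac_eq]
  exact Filter.eventually_pure.2 rfl

/-- Existence of degree-`n` interpolating polynomials at the points of `V`. -/
lemma aux_interp (d n r : ℕ) (Λ : MvPolynomial (Fin d) ℝ →ₗ[ℝ] ℝ)
    (T : MvPolynomial.restrictTotalDegree (Fin d) ℝ n →ₗ[ℝ]
      (MvPolynomial.restrictTotalDegree (Fin d) ℝ n →ₗ[ℝ] ℝ))
    (hT : ∀ p q : MvPolynomial.restrictTotalDegree (Fin d) ℝ n,
      T p q = Λ ((p : MvPolynomial (Fin d) ℝ) * (q : MvPolynomial (Fin d) ℝ)))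
    (w : Fin r → (Fin d → ℝ))
    (V : Set (Fin d → ℝ)) (hVw : V = Set.range w)
    (hV : V = {x | ∀ p : MvPolynomial.restrictTotalDegree (Fin d) ℝ n,
      T p = 0 → MvPolynomial.eval x (p : MvPolynomial (Fin d) ℝ) = 0})
    (hrank : Module.finrank ℝ (LinearMap.range T) = r)
    (hpsd : ∀ p : MvPolynomial (Fin d) ℝ, p.totalDegree ≤ n → 0 ≤ Λ (p * p))
    (hcons : ∀ p : MvPolynomial (Fin d) ℝ, p.totalDegree ≤ 2 * n →
      (∀ x ∈ V, MvPolynomial.eval x p = 0) → Λ p = 0) :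
    ∃ q : Fin r → MvPolynomial.restrictTotalDegree (Fin d) ℝ n,
      ∀ k j, MvPolynomial.eval (w j) ((q k : MvPolynomial (Fin d) ℝ)) = if j = k then 1 else 0 := by
  classical
  let E : MvPolynomial.restrictTotalDegree (Fin d) ℝ n →ₗ[ℝ] (Fin r → ℝ) :=
    { toFun := fun p k => MvPolynomial.eval (w k) (p : MvPolynomial (Fin d) ℝ)
      map_add' := by intro a b; funext k; simp
      map_smul' := by intro c a; funext k; simp }
  have hdegmem : ∀ p : MvPolynomial.restrictTotalDegree (Fin d) ℝ n,
      (p : MvPolynomial (Fin d) ℝ).totalDegree ≤ n := fun p =>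
    (MvPolynomial.mem_restrictTotalDegree _ _ _).mp p.2
  have hker : LinearMap.ker E = LinearMap.ker T := by
    ext p
    simp only [LinearMap.mem_ker]
    constructor
    · intro hE
      have hvan : ∀ x ∈ V, MvPolynomial.eval x ((p:MvPolynomial (Fin d) ℝ) * p) = 0 := by
        intro x hx
        rw [hVw] at hx
        obtain ⟨k, rfl⟩ := hx
        have : MvPolynomial.eval (w k) (p : MvPolynomial (Fin d) ℝ) = 0 := congrFun hE k
        simp [this]
      have hdeg2 : ((p:MvPolynomial (Fin d) ℝ) * p).totalDegree ≤ 2 * n := by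
        refine le_trans (MvPolynomial.totalDegree_mul _ _) ?_
        have := hdegmem p; omega
      have hpp : Λ ((p:MvPolynomial (Fin d) ℝ) * p) = 0 := hcons _ hdeg2 hvan
      ext q
      rw [hT]
      exact aux_cs Λ hpsd _ _ (hdegmem p) (hdegmem q) hpp
    · intro hTp
      funext k
      have hkV : w k ∈ V := by rw [hVw]; exact Set.mem_range_self k
      rw [hV] at hkV
      exact hkV p hTp
  have hfin : Module.finrank ℝ (LinearMap.range E) = r := by
    have h1 := LinearMap.finrank_range_add_finrank_ker E
    have h2 := LinearMap.finrank_range_add_finrank_ker T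
    rw [hker] at h1
    omega
  have hsurj : Function.Surjective E := by
    rw [← LinearMap.range_eq_top]
    apply Submodule.eq_top_of_finrank_eq
    rw [hfin]
    simp
  choose q hq using fun k => hsurj (Pi.single k 1)
  refine ⟨q, fun k j => ?_⟩
  have := congrFun (hq k) j
  simp only [E, LinearMap.coe_mk, AddHom.coe_mk] at this
  rw [this, Pi.single_apply]

set_option maxHeartbeats 1000000 in
set_option synthInstance.maxHeartbeats 1000000 in
/-- Theorem 1.3 ((iii) ⇒ (ii)): an extremal `β^{(2n)}` with `M(n) ⪰ 0` and `β`
consistent has a unique representing measure, namely the `r`-atomic measure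
`Σ ρ_k δ_{w_k}` supported on `V`, with all densities positive. -/
theorem stmt8 (d n r : ℕ) (Λ : MvPolynomial (Fin d) ℝ →ₗ[ℝ] ℝ)
    (T : MvPolynomial.restrictTotalDegree (Fin d) ℝ n →ₗ[ℝ]
      (MvPolynomial.restrictTotalDegree (Fin d) ℝ n →ₗ[ℝ] ℝ))
    (hT : ∀ p q : MvPolynomial.restrictTotalDegree (Fin d) ℝ n,
      T p q = Λ ((p : MvPolynomial (Fin d) ℝ) * (q : MvPolynomial (Fin d) ℝ)))
    (w : Fin r → (Fin d → ℝ)) (hw : Function.Injective w)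
    (V : Set (Fin d → ℝ)) (hVw : V = Set.range w)
    (hV : V = {x | ∀ p : MvPolynomial.restrictTotalDegree (Fin d) ℝ n,
      T p = 0 → MvPolynomial.eval x (p : MvPolynomial (Fin d) ℝ) = 0})
    (hrank : Module.finrank ℝ (LinearMap.range T) = r)
    (hpsd : ∀ p : MvPolynomial (Fin d) ℝ, p.totalDegree ≤ n → 0 ≤ Λ (p * p))
    (hcons : ∀ p : MvPolynomial (Fin d) ℝ, p.totalDegree ≤ 2 * n →
      (∀ x ∈ V, MvPolynomial.eval x p = 0) → Λ p = 0) :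
    ∃ ρ : Fin r → ℝ, (∀ k, 0 < ρ k) ∧
      IsRepresenting d n Λ (∑ k, ENNReal.ofReal (ρ k) • Measure.dirac (w k)) ∧
      ∀ μ : Measure (Fin d → ℝ), IsRepresenting d n Λ μ →
        μ = ∑ k, ENNReal.ofReal (ρ k) • Measure.dirac (w k) := by
  classical
  obtain ⟨q, hq⟩ := aux_interp d n r Λ T hT w V hVw hV hrank hpsd hcons
  have hdegmem : ∀ p : MvPolynomial.restrictTotalDegree (Fin d) ℝ n,
      (p : MvPolynomial (Fin d) ℝ).totalDegree ≤ n := fun p =>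
    (MvPolynomial.mem_restrictTotalDegree _ _ _).mp p.2
  have hdeg2 : ∀ p s : MvPolynomial.restrictTotalDegree (Fin d) ℝ n,
      ((p : MvPolynomial (Fin d) ℝ) * (s : MvPolynomial (Fin d) ℝ)).totalDegree ≤ 2 * n := by
    intro p s
    refine le_trans (MvPolynomial.totalDegree_mul _ _) ?_
    have := hdegmem p; have := hdegmem s; omega
  set ρ : Fin r → ℝ := fun k => Λ ((q k : MvPolynomial (Fin d) ℝ) * (q k)) with hρ
  -- positivity
  have hρnonneg : ∀ k, 0 ≤ ρ k := fun k => hpsd _ (hdegmem (q k))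
  have hρpos : ∀ k, 0 < ρ k := by
    intro k
    rcases lt_or_eq_of_le (hρnonneg k) with h | h
    · exact h
    · exfalso
      have hTqk : T (q k) = 0 := by
        ext s
        rw [hT]
        exact aux_cs Λ hpsd _ _ (hdegmem (q k)) (hdegmem s) h.symm
      have hkV : w k ∈ V := by rw [hVw]; exact Set.mem_range_self k
      rw [hV] at hkV
      have := hkV (q k) hTqk
      rw [hq k k] at this
      simp at this
  -- the evaluation of qk*qk at w j is the Kronecker delta
  have hqq : ∀ k j, MvPolynomial.eval (w j) ((q k : MvPolynomial (Fin d) ℝ) * (q k))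
      = if j = k then 1 else 0 := by
    intro k j
    rw [map_mul, hq k j]
    by_cases h : j = k <;> simp [h]
  -- interpolation identity for the Riesz functional
  have hinterp : ∀ p : MvPolynomial (Fin d) ℝ, p.totalDegree ≤ 2 * n →
      Λ p = ∑ k, ρ k * MvPolynomial.eval (w k) p := by
    intro p hp
    set g : MvPolynomial (Fin d) ℝ :=
      p - ∑ k, (MvPolynomial.eval (w k) p) • ((q k : MvPolynomial (Fin d) ℝ) * (q k)) with hg
    have hgdeg : g.totalDegree ≤ 2 * n := by
      rw [hg, sub_eq_add_neg]
      refine le_trans (MvPolynomial.totalDegree_add _ _) (max_le hp ?_)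
      rw [MvPolynomial.totalDegree_neg]
      refine le_trans (MvPolynomial.totalDegree_finset_sum _ _) ?_
      refine Finset.sup_le fun k _ => ?_
      exact le_trans (MvPolynomial.totalDegree_smul_le _ _) (hdeg2 (q k) (q k))
    have hgvan : ∀ x ∈ V, MvPolynomial.eval x g = 0 := by
      intro x hx
      rw [hVw] at hx
      obtain ⟨j, rfl⟩ := hx
      rw [hg]
      simp only [map_sub, map_sum, MvPolynomial.smul_eval]
      rw [sub_eq_zero]
      rw [Finset.sum_congr rfl (fun k _ => by rw [hqq k j])]
      simp [Finset.sum_ite_eq]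
    have h0 : Λ g = 0 := hcons g hgdeg hgvan
    rw [hg] at h0
    simp only [map_sub, map_sum, LinearMap.map_smul, smul_eq_mul, sub_eq_zero] at h0
    rw [h0]
    exact Finset.sum_congr rfl fun k _ => mul_comm _ _
  -- the candidate measure
  set μ₀ : Measure (Fin d → ℝ) := ∑ k, ENNReal.ofReal (ρ k) • Measure.dirac (w k) with hμ₀
  have hrep : IsRepresenting d n Λ μ₀ := by
    intro p hp
    have hmeas : StronglyMeasurable fun x : Fin d → ℝ => MvPolynomial.eval x p :=
      (MvPolynomial.continuous_eval p).stronglyMeasurable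
    have hint : ∀ k : Fin r, Integrable (fun x => MvPolynomial.eval x p)
        (ENNReal.ofReal (ρ k) • Measure.dirac (w k)) := by
      intro k
      exact (aux_integrable_dirac hmeas (w k)).smul_measure ENNReal.ofReal_ne_top
    constructor
    · rw [hμ₀]
      exact integrable_finset_sum_measure.2 fun k _ => hint k
    · rw [hμ₀, integral_finset_sum_measure fun k _ => hint k]
      rw [hinterp p hp]
      refine Finset.sum_congr rfl fun k _ => ?_
      rw [integral_smul_measure, integral_dirac, ENNReal.toReal_ofReal (hρnonneg k),
        smul_eq_mul]
  refine ⟨ρ, hρpos, hrep, ?_⟩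
  -- uniqueness
  intro μ hμ
  -- μ is a finite measure
  have hμuniv : μ Set.univ < ⊤ := by
    have h1 := (hμ 1 (by simp)).1
    simp only [map_one] at h1
    rcases (integrable_const_iff).1 h1 with h | h
    · exact absurd h one_ne_zero
    · exact h.measure_univ_lt_top
  -- μ-a.e. every kernel polynomial vanishes
  have hker_ae : ∀ p : MvPolynomial.restrictTotalDegree (Fin d) ℝ n, T p = 0 →
      ∀ᵐ x ∂μ, MvPolynomial.eval x (p : MvPolynomial (Fin d) ℝ) = 0 := by
    intro p hTp
    have hpp0 : Λ ((p : MvPolynomial (Fin d) ℝ) * (p : MvPolynomial (Fin d) ℝ)) = 0 := by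
      rw [← hT p p, hTp]; rfl
    have h1 := hμ ((p : MvPolynomial (Fin d) ℝ) * (p : MvPolynomial (Fin d) ℝ)) (hdeg2 p p)
    have hzero : (∫ x, MvPolynomial.eval x ((p : MvPolynomial (Fin d) ℝ) * (p : MvPolynomial (Fin d) ℝ)) ∂μ) = 0 := by
      rw [h1.2, hpp0]
    have hnonneg : 0 ≤ fun x => MvPolynomial.eval x ((p : MvPolynomial (Fin d) ℝ) * (p : MvPolynomial (Fin d) ℝ)) := by
      intro x
      simp only [map_mul, Pi.zero_apply]
      exact mul_self_nonneg _
    have := (integral_eq_zero_iff_of_nonneg hnonneg h1.1).1 hzero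
    filter_upwards [this] with x hx
    simp only [map_mul, Pi.zero_apply] at hx
    exact mul_self_eq_zero.1 (by simpa using hx)
  -- μ-a.e. x ∈ V
  have hVae : ∀ᵐ x ∂μ, x ∈ V := by
    set K := LinearMap.ker T with hK
    haveI : FiniteDimensional ℝ (MvPolynomial.restrictTotalDegree (Fin d) ℝ n) :=
      inferInstance
    haveI : FiniteDimensional ℝ K := inferInstance
    haveI : Module.Free ℝ K := Module.Free.of_divisionRing ℝ K
    set m := Module.finrank ℝ K with hm
    set b := Module.finBasis ℝ K with hb
    have hball : ∀ᵐ x ∂μ, ∀ i : Fin m,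
        MvPolynomial.eval x ((b i : K) : MvPolynomial (Fin d) ℝ) = 0 := by
      rw [MeasureTheory.ae_all_iff]
      intro i
      exact hker_ae (b i : K) (b i).2
    filter_upwards [hball] with x hx
    rw [hV]
    intro p hTp
    have hpK : p ∈ K := hTp
    have hrepr := Module.Basis.sum_repr b ⟨p, hpK⟩
    have : ((⟨p, hpK⟩ : K) : MvPolynomial.restrictTotalDegree (Fin d) ℝ n)
        = ∑ i, (b.repr ⟨p, hpK⟩ i) • ((b i : K) :
          MvPolynomial.restrictTotalDegree (Fin d) ℝ n) := by
      rw [← hrepr]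
      push_cast
      simp
    have hcoe : (p : MvPolynomial (Fin d) ℝ)
        = ∑ i, (b.repr ⟨p, hpK⟩ i) • (((b i : K) :
            MvPolynomial.restrictTotalDegree (Fin d) ℝ n) : MvPolynomial (Fin d) ℝ) := by
      have := congrArg
        (fun z : MvPolynomial.restrictTotalDegree (Fin d) ℝ n => (z : MvPolynomial (Fin d) ℝ))
        this
      simpa using this
    rw [hcoe]
    simp only [map_sum, MvPolynomial.smul_eval]
    refine Finset.sum_eq_zero fun i _ => ?_
    rw [hx i]
    ring
  have hVc0 : μ Vᶜ = 0 := by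
    rw [MeasureTheory.ae_iff] at hVae
    simpa [Set.compl_def] using hVae
  -- compute the mass at each atom
  have hVmeas : MeasurableSet V := by
    rw [hVw]
    exact (Set.finite_range w).measurableSet
  have hmass : ∀ k, μ {w k} = ENNReal.ofReal (ρ k) := by
    intro k
    have h1 := hμ ((q k : MvPolynomial (Fin d) ℝ) * (q k)) (hdeg2 (q k) (q k))
    have hfeq : (fun x => MvPolynomial.eval x ((q k : MvPolynomial (Fin d) ℝ) * (q k)))
        =ᵐ[μ] Set.indicator {w k} (fun _ => (1:ℝ)) := by
      filter_upwards [hVae] with x hx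
      rw [hVw] at hx
      obtain ⟨j, rfl⟩ := hx
      rw [hqq k j]
      by_cases h : j = k
      · subst h; simp
      · have : w j ∉ ({w k} : Set (Fin d → ℝ)) := by
          simp only [Set.mem_singleton_iff]
          exact fun hc => h (hw hc)
        rw [Set.indicator_of_notMem this, if_neg h]
    have h2 : (∫ x, MvPolynomial.eval x ((q k : MvPolynomial (Fin d) ℝ) * (q k)) ∂μ)
        = (μ {w k}).toReal := by
      rw [integral_congr_ae hfeq]
      exact MeasureTheory.integral_indicator_one (measurableSet_singleton (w k)) (μ := μ)
    have h3 : (μ {w k}).toReal = ρ k := by rw [← h2, h1.2, hρ]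
    have hne : μ {w k} ≠ ⊤ :=
      ne_top_of_le_ne_top hμuniv.ne (measure_mono (Set.subset_univ _))
    rw [← h3, ENNReal.ofReal_toReal hne]
  -- conclude μ = μ₀ by extensionality
  refine Measure.ext fun s hs => ?_
  have hsplit : μ (s ∩ V) + μ (s \ V) = μ s := measure_inter_add_diff s hVmeas
  have hdiff : μ (s \ V) = 0 :=
    measure_mono_null (fun x hx => hx.2) hVc0
  have hμs : μ s = μ (s ∩ V) := by
    rw [← hsplit, hdiff, add_zero]
  have hinterV : s ∩ V = ⋃ k ∈ (Finset.univ : Finset (Fin r)), s ∩ {w k} := by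
    rw [hVw]
    ext x
    simp only [Set.mem_inter_iff, Set.mem_range, Set.mem_iUnion, Set.mem_singleton_iff,
      Finset.mem_univ, exists_prop, true_and]
    tauto
  have hdisj : Set.PairwiseDisjoint (↑(Finset.univ : Finset (Fin r)))
      (fun k => s ∩ {w k}) := by
    intro i _ j _ hij
    refine Set.disjoint_left.2 fun x hxi hxj => ?_
    have h1 : x = w i := hxi.2
    have h2 : x = w j := hxj.2
    exact hij (hw (h1 ▸ h2 ▸ rfl))
  have hμsum : μ (s ∩ V) = ∑ k, μ (s ∩ {w k}) := by
    rw [hinterV]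
    exact measure_biUnion_finset hdisj fun k _ => hs.inter (measurableSet_singleton _)
  have hterm : ∀ k, μ (s ∩ {w k})
      = ENNReal.ofReal (ρ k) * Measure.dirac (w k) s := by
    intro k
    rw [Measure.dirac_apply' _ hs]
    by_cases h : w k ∈ s
    · have : s ∩ {w k} = {w k} := by
        ext x; simp only [Set.mem_inter_iff, Set.mem_singleton_iff]
        exact ⟨fun hx => hx.2, fun hx => ⟨hx ▸ h, hx⟩⟩
      rw [this, hmass k, Set.indicator_of_mem h]
      simp
    · have : s ∩ {w k} = ∅ := by
        ext x; simp only [Set.mem_inter_iff, Set.mem_singleton_iff, Set.mem_empty_iff_false,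
          iff_false, not_and]
        exact fun hx hxk => h (hxk ▸ hx)
      rw [this, Set.indicator_of_notMem h]
      simp
  rw [hμs, hμsum]
  rw [Measure.finset_sum_apply]
  exact Finset.sum_congr rfl fun k _ => by
    rw [hterm k, Measure.smul_apply, smul_eq_mul]
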